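/- Let γ ∈ ℝⁿ be dominant and J ⊆ P(γ). Then F^{(γ,J)} is nonempty if and only if both of the following hold: (i) whenever (i,j) ∈ J and (k,j) ∈ Z(γ) with i < k, then (i,k) ∈ J; and (ii) whenever (i,j) ∈ J and (i,k) ∈ Z(γ) with k < j, then (k,j) ∈ J. (Equivalently, in root-system language: if β ∈ J, α ∈ Z(γ) and β − α is a positive root, then β − α ∈ J, where the pair (i,j) corresponds to the root ε_j − ε_i.) -/

import Mathlib

namespace Stmt7

variable {n : ℕ}

/-- The inversion set `R(w) = {(i,j) : i < j, w i > w j}`. -/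
def invSet (w : Equiv.Perm (Fin n)) : Set (Fin n × Fin n) :=
  {p | p.1 < p.2 ∧ w p.2 < w p.1}

/-- `Z(γ) = {(i,j) : i < j, γ i = γ j}`. -/
def Zset (γ : Fin n → ℝ) : Set (Fin n × Fin n) :=
  {p | p.1 < p.2 ∧ γ p.1 = γ p.2}

/-- `P(γ) = {(i,j) : i < j, γ j = γ i + 1}`. -/
def Pset (γ : Fin n → ℝ) : Set (Fin n × Fin n) :=
  {p | p.1 < p.2 ∧ γ p.2 = γ p.1 + 1}

/-- `F^{(γ,J)} = {w : R(w) ∩ Z(γ) = ∅, R(w) ∩ P(γ) = J}`. -/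
def Fset (γ : Fin n → ℝ) (J : Set (Fin n × Fin n)) : Set (Equiv.Perm (Fin n)) :=
  {w | invSet w ∩ Zset γ = ∅ ∧ invSet w ∩ Pset γ = J}

open Classical in
/-- predecessors that must get a strictly smaller key -/
noncomputable def Lf (γ : Fin n → ℝ) (J : Set (Fin n × Fin n)) (m : ℕ) : Finset ℕ :=
  (Finset.range m).filter fun k => ∃ (hk : k < n) (hm : m < n),
    γ ⟨k, hk⟩ = γ ⟨m, hm⟩ ∨ (γ ⟨m, hm⟩ = γ ⟨k, hk⟩ + 1 ∧ ((⟨k, hk⟩, ⟨m, hm⟩) : Fin n × Fin n) ∉ J)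

open Classical in
/-- predecessors that must get a strictly larger key -/
noncomputable def Hf (γ : Fin n → ℝ) (J : Set (Fin n × Fin n)) (m : ℕ) : Finset ℕ :=
  (Finset.range m).filter fun k => ∃ (hk : k < n) (hm : m < n),
    ((⟨k, hk⟩, ⟨m, hm⟩) : Fin n × Fin n) ∈ J

open Classical in
lemma mem_Lf {γ : Fin n → ℝ} {J : Set (Fin n × Fin n)} {k m : ℕ} :
    k ∈ Lf γ J m ↔ k < m ∧ ∃ (hk : k < n) (hm : m < n),
      γ ⟨k, hk⟩ = γ ⟨m, hm⟩ ∨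
        (γ ⟨m, hm⟩ = γ ⟨k, hk⟩ + 1 ∧ ((⟨k, hk⟩, ⟨m, hm⟩) : Fin n × Fin n) ∉ J) := by
  simp [Lf, Finset.mem_filter, Finset.mem_range]

open Classical in
lemma mem_Hf {γ : Fin n → ℝ} {J : Set (Fin n × Fin n)} {k m : ℕ} :
    k ∈ Hf γ J m ↔ k < m ∧ ∃ (hk : k < n) (hm : m < n),
      ((⟨k, hk⟩, ⟨m, hm⟩) : Fin n × Fin n) ∈ J := by
  simp [Hf, Finset.mem_filter, Finset.mem_range]

lemma Lf_lt {γ : Fin n → ℝ} {J : Set (Fin n × Fin n)} {k m : ℕ} (h : k ∈ Lf γ J m) : k < m :=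
  (mem_Lf.mp h).1

lemma Hf_lt {γ : Fin n → ℝ} {J : Set (Fin n × Fin n)} {k m : ℕ} (h : k ∈ Hf γ J m) : k < m :=
  (mem_Hf.mp h).1

/-- the "in between" value -/
noncomputable def dval (Ls Hs : Finset ℝ) : ℝ :=
  if hH : Hs.Nonempty then
    if hL : Ls.Nonempty then (Ls.max' hL + Hs.min' hH) / 2 else Hs.min' hH - 1
  else if hL : Ls.Nonempty then Ls.max' hL + 1 else 0

lemma dval_between {Ls Hs : Finset ℝ} (hcross : ∀ x ∈ Ls, ∀ y ∈ Hs, x < y) :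
    (∀ x ∈ Ls, x < dval Ls Hs) ∧ (∀ y ∈ Hs, dval Ls Hs < y) := by
  unfold dval
  by_cases hH : Hs.Nonempty <;> by_cases hL : Ls.Nonempty
  · rw [dif_pos hH, dif_pos hL]
    have hkey : Ls.max' hL < Hs.min' hH :=
      hcross _ (Finset.max'_mem _ hL) _ (Finset.min'_mem _ hH)
    constructor
    · intro x hx
      have := Finset.le_max' Ls x hx
      linarith
    · intro y hy
      have := Finset.min'_le Hs y hy
      linarith
  · rw [dif_pos hH, dif_neg hL]
    constructor
    · intro x hx; exact absurd ⟨x, hx⟩ hL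
    · intro y hy
      have := Finset.min'_le Hs y hy
      linarith
  · rw [dif_neg hH, dif_pos hL]
    constructor
    · intro x hx
      have := Finset.le_max' Ls x hx
      linarith
    · intro y hy; exact absurd ⟨y, hy⟩ hH
  · rw [dif_neg hH, dif_neg hL]
    exact ⟨fun x hx => absurd ⟨x, hx⟩ hL, fun y hy => absurd ⟨y, hy⟩ hH⟩

noncomputable def fA (γ : Fin n → ℝ) (J : Set (Fin n × Fin n)) : ℕ → ℝ
  | m =>
    dval ((Lf γ J m).attach.image fun k => fA γ J k.1)
         ((Hf γ J m).attach.image fun k => fA γ J k.1)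
termination_by m => m
decreasing_by
  · exact Lf_lt k.2
  · exact Hf_lt k.2

lemma fA_spec (γ : Fin n → ℝ) (hdom : Monotone γ) (J : Set (Fin n × Fin n)) (hJ : J ⊆ Pset γ)
    (h1 : ∀ i j k : Fin n, (i, j) ∈ J → (k, j) ∈ Zset γ → i < k → (i, k) ∈ J)
    (h2 : ∀ i j k : Fin n, (i, j) ∈ J → (i, k) ∈ Zset γ → k < j → (k, j) ∈ J) :
    ∀ m : ℕ, (∀ k ∈ Lf γ J m, fA γ J k < fA γ J m) ∧ (∀ k ∈ Hf γ J m, fA γ J m < fA γ J k) := by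
  intro m
  induction m using Nat.strong_induction_on with
  | _ m IH =>
  have cross : ∀ k ∈ Lf γ J m, ∀ k' ∈ Hf γ J m, fA γ J k < fA γ J k' := by
    intro k hk k' hk'
    obtain ⟨hkm, hkn, hmn, hd⟩ := mem_Lf.mp hk
    obtain ⟨hk'm, hk'n, hmn', hJ'⟩ := mem_Hf.mp hk'
    set K : Fin n := ⟨k, hkn⟩
    set K' : Fin n := ⟨k', hk'n⟩
    set M : Fin n := ⟨m, hmn⟩
    have hJ'' : (K', M) ∈ J := hJ'
    have hPKM : γ M = γ K' + 1 := (hJ hJ'').2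
    rcases hd with heq | ⟨hP, hnJ⟩
    · -- γ K = γ M : same class as M; then K' < K and (K', K) ∈ J
      have hlt : K' < K := by
        by_contra hc
        push_neg at hc
        have := hdom hc
        rw [heq] at this
        linarith [hPKM ▸ this]
      have hmemJ : (K', K) ∈ J :=
        h1 K' M K hJ'' ⟨Fin.mk_lt_mk.mpr hkm, heq⟩ hlt
      have : k' ∈ Hf γ J k := mem_Hf.mpr ⟨hlt, hk'n, hkn, hmemJ⟩
      exact (IH k hkm).2 k' this
    · -- γ M = γ K + 1 and (K, M) ∉ J; then γ K = γ K'
      have heqKK' : γ K = γ K' := by linarith [hP, hPKM]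
      rcases lt_trichotomy k k' with hc | hc | hc
      · have : k ∈ Lf γ J k' := mem_Lf.mpr ⟨hc, hkn, hk'n, Or.inl heqKK'⟩
        exact (IH k' hk'm).1 k this
      · exfalso
        apply hnJ
        have : K = K' := Fin.ext hc
        rw [this]; exact hJ''
      · exfalso
        apply hnJ
        exact h2 K' M K hJ'' ⟨Fin.mk_lt_mk.mpr hc, heqKK'.symm⟩ (Fin.mk_lt_mk.mpr hkm)
  have hfm : fA γ J m = dval ((Lf γ J m).attach.image fun k => fA γ J k.1)
      ((Hf γ J m).attach.image fun k => fA γ J k.1) := by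
    rw [fA]
  have hcross' : ∀ x ∈ (Lf γ J m).attach.image fun k => fA γ J k.1,
      ∀ y ∈ (Hf γ J m).attach.image fun k => fA γ J k.1, x < y := by
    intro x hx y hy
    obtain ⟨⟨k, hk⟩, -, rfl⟩ := Finset.mem_image.mp hx
    obtain ⟨⟨k', hk'⟩, -, rfl⟩ := Finset.mem_image.mp hy
    exact cross k hk k' hk'
  obtain ⟨hlo, hhi⟩ := dval_between hcross'
  constructor
  · intro k hk
    rw [hfm]
    exact hlo _ (Finset.mem_image.mpr ⟨⟨k, hk⟩, Finset.mem_attach _ _, rfl⟩)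
  · intro k hk
    rw [hfm]
    exact hhi _ (Finset.mem_image.mpr ⟨⟨k, hk⟩, Finset.mem_attach _ _, rfl⟩)

lemma sort_inv_lt (f : Fin n → ℝ) {i j : Fin n} (hij : i < j) :
    (Tuple.sort f)⁻¹ j < (Tuple.sort f)⁻¹ i ↔ f j < f i := by
  obtain ⟨hmono, hstab⟩ := Tuple.eq_sort_iff.mp (rfl : Tuple.sort f = Tuple.sort f)
  constructor
  · intro h
    have h1 : (f ∘ Tuple.sort f) ((Tuple.sort f)⁻¹ j) ≤ (f ∘ Tuple.sort f) ((Tuple.sort f)⁻¹ i) :=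
      hmono h.le
    simp only [Function.comp_apply, Equiv.Perm.coe_inv, Equiv.apply_symm_apply] at h1
    rcases h1.lt_or_eq with h2 | h2
    · exact h2
    · exfalso
      have h3 : f (Tuple.sort f ((Tuple.sort f)⁻¹ j)) = f (Tuple.sort f ((Tuple.sort f)⁻¹ i)) := by
        simpa using h2
      have := hstab _ _ h h3
      simp only [Equiv.Perm.coe_inv, Equiv.apply_symm_apply] at this
      exact absurd hij (lt_asymm this)
  · intro h
    rcases lt_trichotomy ((Tuple.sort f)⁻¹ i) ((Tuple.sort f)⁻¹ j) with hc | hc | hc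
    · exfalso
      have h1 : (f ∘ Tuple.sort f) ((Tuple.sort f)⁻¹ i) ≤ (f ∘ Tuple.sort f) ((Tuple.sort f)⁻¹ j) :=
        hmono hc.le
      simp only [Function.comp_apply, Equiv.Perm.coe_inv, Equiv.apply_symm_apply] at h1
      linarith
    · exfalso
      have : i = j := (Equiv.injective _) hc
      exact hij.ne this
    · exact hc

theorem stmt7 (γ : Fin n → ℝ) (hdom : Monotone γ)
    (J : Set (Fin n × Fin n)) (hJ : J ⊆ Pset γ) :
    (Fset γ J).Nonempty ↔
      ((∀ i j k : Fin n, (i, j) ∈ J → (k, j) ∈ Zset γ → i < k → (i, k) ∈ J) ∧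
       (∀ i j k : Fin n, (i, j) ∈ J → (i, k) ∈ Zset γ → k < j → (k, j) ∈ J)) := by
  constructor
  · rintro ⟨w, hZ, hP⟩
    constructor
    · intro i j k hij hkj hik
      rw [← hP] at hij
      obtain ⟨⟨hij_lt, hinv⟩, -, hij_P⟩ := hij
      obtain ⟨hkj_lt, hkj_eq⟩ := hkj
      have hwk : ¬ w j < w k := fun hc =>
        Set.eq_empty_iff_forall_notMem.mp hZ (k, j) ⟨⟨hkj_lt, hc⟩, hkj_lt, hkj_eq⟩
      rw [← hP]
      exact ⟨⟨hik, lt_of_le_of_lt (le_of_not_gt hwk) hinv⟩, hik, hkj_eq.trans hij_P⟩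
    · intro i j k hij hik hkj
      rw [← hP] at hij
      obtain ⟨⟨hij_lt, hinv⟩, -, hij_P⟩ := hij
      obtain ⟨hik_lt, hik_eq⟩ := hik
      have hwk : ¬ w k < w i := fun hc =>
        Set.eq_empty_iff_forall_notMem.mp hZ (i, k) ⟨⟨hik_lt, hc⟩, hik_lt, hik_eq⟩
      rw [← hP]
      refine ⟨⟨hkj, lt_of_lt_of_le hinv (le_of_not_gt hwk)⟩, hkj, ?_⟩
      rw [← hik_eq]; exact hij_P
  · rintro ⟨h1, h2⟩
    have spec := fA_spec γ hdom J hJ h1 h2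
    set f : Fin n → ℝ := fun i => fA γ J i.1 with hf
    have fact_low : ∀ i j : Fin n, i < j →
        (γ i = γ j ∨ (γ j = γ i + 1 ∧ (i, j) ∉ J)) → f i < f j := by
      intro i j hij hd
      exact (spec j.1).1 i.1 (mem_Lf.mpr ⟨hij, i.2, j.2, hd⟩)
    have fact_high : ∀ i j : Fin n, (i, j) ∈ J → f j < f i := by
      intro i j hmem
      exact (spec j.1).2 i.1 (mem_Hf.mpr ⟨(hJ hmem).1, i.2, j.2, hmem⟩)
    refine ⟨(Tuple.sort f)⁻¹, ?_, ?_⟩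
    · apply Set.eq_empty_iff_forall_notMem.mpr
      rintro p ⟨⟨hlt, hinv⟩, -, heq⟩
      have hA : f p.2 < f p.1 := (sort_inv_lt f hlt).mp hinv
      have hB : f p.1 < f p.2 := fact_low p.1 p.2 hlt (Or.inl heq)
      linarith
    · ext p
      simp only [Set.mem_inter_iff]
      constructor
      · rintro ⟨⟨hlt, hinv⟩, -, hPeq⟩
        by_contra hpj
        have hA : f p.2 < f p.1 := (sort_inv_lt f hlt).mp hinv
        have hB : f p.1 < f p.2 := fact_low p.1 p.2 hlt (Or.inr ⟨hPeq, hpj⟩)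
        linarith
      · intro hpJ
        have hP := hJ hpJ
        obtain ⟨hlt, hPeq⟩ := hP
        exact ⟨⟨hlt, (sort_inv_lt f hlt).mpr (fact_high p.1 p.2 hpJ)⟩, hlt, hPeq⟩

end Stmt7
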